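/- Let Ω be a locally compact Hausdorff space and T : C₀(Ω) → C₀(Ω) a ℂ-linear map (not assumed bounded) which is local, i.e., for all f, g ∈ C₀(Ω), f·g = 0 implies T(f)·g = 0. Then T is C₀(Ω)-linear: T(f·φ) = T(f)·φ for all f, φ ∈ C₀(Ω). -/

import Mathlib

open ZeroAtInfty

namespace Stmt5Aux

open Filter Set

set_option linter.unusedSectionVars false

variable {Ω : Type*} [TopologicalSpace Ω] [LocallyCompactSpace Ω] [T2Space Ω]

noncomputable def eta (t s : ℝ) : ℝ := max 0 (min 1 (2 - s / t))

lemma eta_nonneg (t s : ℝ) : 0 ≤ eta t s := le_max_left _ _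

lemma eta_le_one (t s : ℝ) : eta t s ≤ 1 := max_le zero_le_one (min_le_left _ _)

lemma eta_eq_one {t s : ℝ} (ht : 0 < t) (hs : s ≤ t) : eta t s = 1 := by
  have h1 : (1 : ℝ) ≤ 2 - s / t := by
    have : s / t ≤ 1 := (div_le_one ht).mpr hs
    linarith
  rw [eta, min_eq_left h1, max_eq_right zero_le_one]

lemma eta_eq_zero {t s : ℝ} (ht : 0 < t) (hs : 2 * t ≤ s) : eta t s = 0 := by
  have h1 : 2 - s / t ≤ 0 := by
    have : (2 : ℝ) ≤ s / t := (le_div_iff₀ ht).mpr (by linarith)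
    linarith
  rw [eta, min_eq_right (h1.trans zero_le_one), max_eq_left h1]

/-- `h` multiplied by the cutoff `eta t ‖h ·‖`. -/
noncomputable def qf (h : C₀(Ω, ℂ)) (t : ℝ) : C₀(Ω, ℂ) :=
  ⟨⟨fun x => ((eta t ‖h x‖ : ℝ) : ℂ) * h x, by
      unfold eta; fun_prop⟩, by
    refine squeeze_zero_norm (fun x => ?_) (by simpa using (zero_at_infty h).norm)
    calc ‖((eta t ‖h x‖ : ℝ) : ℂ) * h x‖ = |eta t ‖h x‖| * ‖h x‖ := by
          rw [norm_mul, Complex.norm_real, Real.norm_eq_abs]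
      _ ≤ 1 * ‖h x‖ := by
          apply mul_le_mul_of_nonneg_right _ (norm_nonneg _)
          rw [abs_of_nonneg (eta_nonneg _ _)]
          exact eta_le_one _ _
      _ = ‖h x‖ := one_mul _⟩

lemma qf_apply (h : C₀(Ω, ℂ)) (t : ℝ) (x : Ω) :
    qf h t x = ((eta t ‖h x‖ : ℝ) : ℂ) * h x := rfl

lemma qf_eq_self {h : C₀(Ω, ℂ)} {t : ℝ} (ht : 0 < t) {x : Ω} (hx : ‖h x‖ ≤ t) :
    qf h t x = h x := by
  rw [qf_apply, eta_eq_one ht hx, Complex.ofReal_one, one_mul]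

lemma qf_eq_zero {h : C₀(Ω, ℂ)} {t : ℝ} (ht : 0 < t) {x : Ω} (hx : 2 * t ≤ ‖h x‖) :
    qf h t x = 0 := by
  rw [qf_apply, eta_eq_zero ht hx, Complex.ofReal_zero, zero_mul]

lemma norm_apply_le (f : C₀(Ω, ℂ)) (x : Ω) : ‖f x‖ ≤ ‖f‖ := by
  rw [← ZeroAtInftyContinuousMap.norm_toBCF_eq_norm]
  exact f.toBCF.norm_coe_le_norm x

lemma qf_norm_le {h : C₀(Ω, ℂ)} {t : ℝ} (ht : 0 < t) : ‖qf h t‖ ≤ 2 * t := by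
  rw [← ZeroAtInftyContinuousMap.norm_toBCF_eq_norm]
  refine (BoundedContinuousFunction.norm_le (by positivity)).mpr fun x => ?_
  rcases le_or_gt (2 * t) ‖h x‖ with hx | hx
  · show ‖qf h t x‖ ≤ 2 * t
    rw [qf_eq_zero ht hx, norm_zero]; positivity
  · show ‖qf h t x‖ ≤ 2 * t
    calc ‖qf h t x‖ = |eta t ‖h x‖| * ‖h x‖ := by
          rw [qf_apply, norm_mul, Complex.norm_real, Real.norm_eq_abs]
      _ ≤ 1 * (2 * t) := by
          apply mul_le_mul _ hx.le (norm_nonneg _) zero_le_one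
          rw [abs_of_nonneg (eta_nonneg _ _)]; exact eta_le_one _ _
      _ = 2 * t := one_mul _

/-- Evaluation at a point as a continuous linear map. -/
noncomputable def evalCLM (x : Ω) : C₀(Ω, ℂ) →L[ℂ] ℂ :=
  LinearMap.mkContinuous
    { toFun := fun f => f x
      map_add' := fun f g => rfl
      map_smul' := fun c f => rfl } 1
    (fun f => by rw [one_mul]; exact norm_apply_le f x)

lemma evalCLM_apply (x : Ω) (f : C₀(Ω, ℂ)) : evalCLM x f = f x := rfl

section T

variable (T : C₀(Ω, ℂ) →ₗ[ℂ] C₀(Ω, ℂ))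
    (hloc : ∀ f g : C₀(Ω, ℂ), f * g = 0 → T f * g = 0)

include hloc in
/-- Locality: if `k` vanishes on an open set `O` then so does `T k` on `O`. -/
lemma lemA (k : C₀(Ω, ℂ)) {O : Set Ω} (hO : IsOpen O) (hk : ∀ y ∈ O, k y = 0)
    {x : Ω} (hx : x ∈ O) : T k x = 0 := by
  obtain ⟨f, hf1, hf0, hfc, -⟩ :=
    exists_continuous_one_zero_of_isCompact (isCompact_singleton (x := x))
      (isClosed_compl_iff.mpr hO) (by simpa using hx)
  have hzero : Tendsto (fun y => ((f y : ℝ) : ℂ)) (cocompact Ω) (nhds 0) := by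
    have hev : ∀ᶠ y in cocompact Ω, ((f y : ℝ) : ℂ) = 0 := by
      refine Filter.mem_of_superset
        (Filter.mem_cocompact.mpr ⟨tsupport f, hfc, Set.Subset.rfl⟩) ?_
      intro y hy
      simp only [Set.mem_setOf_eq]
      rw [image_eq_zero_of_notMem_tsupport hy, Complex.ofReal_zero]
    exact Tendsto.congr' (Filter.EventuallyEq.symm hev) tendsto_const_nhds
  set g : C₀(Ω, ℂ) := ⟨⟨fun y => ((f y : ℝ) : ℂ), by fun_prop⟩, hzero⟩ with hg
  have hkg : k * g = 0 := by
    ext y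
    show k y * ((f y : ℝ) : ℂ) = 0
    by_cases hy : y ∈ O
    · rw [hk y hy, zero_mul]
    · have hfy : f y = 0 := hf0 hy
      rw [hfy, Complex.ofReal_zero, mul_zero]
  have h2 := hloc k g hkg
  have h3 : T k x * g x = 0 := by
    have := congrArg (fun u => u x) h2
    simpa using this
  have hgx : g x = 1 := by
    show ((f x : ℝ) : ℂ) = 1
    have : f x = 1 := hf1 rfl
    rw [this]; norm_num
  rw [hgx, mul_one] at h3
  exact h3

include hloc in
/-- The key point: at a zero of `h`, `T h` also vanishes. -/
lemma key (h : C₀(Ω, ℂ)) (ω : Ω) (hω : h ω = 0) : T h ω = 0 := by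
  by_contra hc
  set c : ℂ := T h ω with hcdef
  have hcpos : 0 < ‖c‖ := by simpa using hc
  set t : ℕ → ℝ := fun n => (4 : ℝ)⁻¹ ^ n with htdef
  have htpos : ∀ n, 0 < t n := fun n => by positivity
  have htanti : ∀ {a b : ℕ}, a ≤ b → t b ≤ t a := fun {a b} hab =>
    pow_le_pow_of_le_one (by norm_num) (by norm_num) hab
  have ht0 : Tendsto t atTop (nhds 0) :=
    tendsto_pow_atTop_nhds_zero_of_lt_one (by norm_num) (by norm_num)
  have hthalf : ∀ n, 2 * t (n + 1) < t n := by
    intro n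
    have h4 : t (n + 1) = 4⁻¹ * t n := by
      show (4 : ℝ)⁻¹ ^ (n + 1) = 4⁻¹ * (4 : ℝ)⁻¹ ^ n
      ring
    rw [h4]
    nlinarith [htpos n]
  set Q : ℕ → C₀(Ω, ℂ) := fun n => qf h (t n) with hQdef
  have hTQω : ∀ n, T (Q n) ω = c := by
    intro n
    have hvan : ∀ y ∈ {y | ‖h y‖ < t n}, (h - Q n) y = 0 := by
      intro y hy
      show h y - Q n y = 0
      rw [show Q n y = qf h (t n) y from rfl, qf_eq_self (htpos n) (le_of_lt hy), sub_self]
    have hopen : IsOpen {y | ‖h y‖ < t n} :=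
      isOpen_lt (by fun_prop) continuous_const
    have hωmem : ω ∈ {y | ‖h y‖ < t n} := by
      simp only [Set.mem_setOf_eq, hω, norm_zero]
      exact htpos n
    have h0 := lemA T hloc (h - Q n) hopen hvan hωmem
    rw [map_sub] at h0
    have h5 : T h ω - T (Q n) ω = 0 := by simpa using h0
    rw [← hcdef] at h5
    linear_combination -h5
  have hstep : ∀ m : ℕ, ∃ x, ‖T (Q m) x - c‖ < ‖c‖ / 2 ∧ Q (m + 1) x ≠ 0 := by
    intro m
    by_contra hcon
    push_neg at hcon
    have hopen : IsOpen {y | ‖T (Q m) y - c‖ < ‖c‖ / 2} :=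
      isOpen_lt (by fun_prop) continuous_const
    have hωmem : ω ∈ {y | ‖T (Q m) y - c‖ < ‖c‖ / 2} := by
      simp only [Set.mem_setOf_eq, hTQω m, sub_self, norm_zero]
      positivity
    have := lemA T hloc (Q (m + 1)) hopen (fun y hy => hcon y hy) hωmem
    rw [hTQω (m + 1)] at this
    exact hc this
  set pt : ℕ → Ω := fun m => (hstep m).choose with hptdef
  have hpt1 : ∀ m, ‖T (Q m) (pt m) - c‖ < ‖c‖ / 2 := fun m => (hstep m).choose_spec.1
  have hpt2 : ∀ m, Q (m + 1) (pt m) ≠ 0 := fun m => (hstep m).choose_spec.2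
  have hpts : ∀ m, ‖h (pt m)‖ < t m ∧ 0 < ‖h (pt m)‖ := by
    intro m
    constructor
    · by_contra hcon
      push_neg at hcon
      exact hpt2 m (qf_eq_zero (htpos (m + 1)) ((hthalf m).le.trans hcon))
    · rcases eq_or_ne (h (pt m)) 0 with h0 | h0
      · exfalso
        apply hpt2 m
        show qf h (t (m + 1)) (pt m) = 0
        rw [qf_apply, h0, mul_zero]
      · simpa using h0
  have hm : ∀ m : ℕ, ∃ M, m < M ∧ 2 * t M < ‖h (pt m)‖ := by
    intro m
    have h1 : ∀ᶠ M in atTop, 2 * t M < ‖h (pt m)‖ := by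
      have h2 := ht0.const_mul (2 : ℝ)
      rw [mul_zero] at h2
      exact h2.eventually_lt_const (hpts m).2
    exact ((eventually_gt_atTop m).and h1).exists
  set mseq : ℕ → ℕ := fun i =>
    Nat.rec 0 (fun _ prev => (hm prev).choose) i with hmseqdef
  have hmseq_succ : ∀ i, mseq (i + 1) = (hm (mseq i)).choose := fun i => rfl
  have hmlt : ∀ i, mseq i < mseq (i + 1) := by
    intro i; rw [hmseq_succ]; exact (hm (mseq i)).choose_spec.1
  have hmono : StrictMono mseq := strictMono_nat_of_lt_succ hmlt
  have hm2 : ∀ i, 2 * t (mseq (i + 1)) < ‖h (pt (mseq i))‖ := by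
    intro i; rw [hmseq_succ]; exact (hm (mseq i)).choose_spec.2
  set xs : ℕ → Ω := fun i => pt (mseq i) with hxdef
  set u : ℕ → C₀(Ω, ℂ) := fun i =>
    ((i + 1 : ℕ) : ℂ) • (Q (mseq i) - Q (mseq (i + 1))) with hudef
  have hnorm_u : ∀ i, ‖u i‖ ≤ ((i : ℝ) + 1) * (4 * t i) := by
    intro i
    have h3 : i ≤ mseq i := hmono.le_apply
    have h4 : t (mseq i) ≤ t i := htanti h3
    have h5 : t (mseq (i + 1)) ≤ t i := htanti (h3.trans (hmlt i).le)
    rw [← ZeroAtInftyContinuousMap.norm_toBCF_eq_norm]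
    refine (BoundedContinuousFunction.norm_le (by positivity)).mpr fun y => ?_
    show ‖((i + 1 : ℕ) : ℂ) * (Q (mseq i) y - Q (mseq (i + 1)) y)‖ ≤ ((i : ℝ) + 1) * (4 * t i)
    rw [norm_mul, Complex.norm_natCast]
    have h6 : ((i + 1 : ℕ) : ℝ) = (i : ℝ) + 1 := by push_cast; ring
    rw [h6]
    refine mul_le_mul_of_nonneg_left ?_ (by positivity)
    calc ‖Q (mseq i) y - Q (mseq (i + 1)) y‖
        ≤ ‖Q (mseq i) y‖ + ‖Q (mseq (i + 1)) y‖ := norm_sub_le _ _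
      _ ≤ 2 * t (mseq i) + 2 * t (mseq (i + 1)) := by
          refine add_le_add ?_ ?_
          · exact (norm_apply_le _ _).trans (qf_norm_le (htpos _))
          · exact (norm_apply_le _ _).trans (qf_norm_le (htpos _))
      _ ≤ 4 * t i := by linarith
  have hsummable : Summable u := by
    refine Summable.of_norm_bounded (g := fun i : ℕ => ((i : ℝ) + 1) * (4 * t i)) ?_ hnorm_u
    have h4 : Summable (fun i : ℕ => (i : ℝ) * (4⁻¹ : ℝ) ^ i) := by
      have := summable_pow_mul_geometric_of_norm_lt_one (R := ℝ) 1
        (r := (4⁻¹ : ℝ)) (by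
          rw [Real.norm_eq_abs, abs_of_nonneg (by norm_num : (0:ℝ) ≤ 4⁻¹)]; norm_num)
      simpa [pow_one] using this
    have h5 : Summable (fun i : ℕ => ((4⁻¹ : ℝ)) ^ i) :=
      summable_geometric_of_lt_one (by norm_num) (by norm_num)
    have h6 := (h4.add h5).mul_left 4
    refine h6.congr fun i => ?_
    show 4 * ((i : ℝ) * 4⁻¹ ^ i + 4⁻¹ ^ i) = ((i : ℝ) + 1) * (4 * t i)
    show 4 * ((i : ℝ) * 4⁻¹ ^ i + 4⁻¹ ^ i) = ((i : ℝ) + 1) * (4 * (4 : ℝ)⁻¹ ^ i)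
    ring
  set K : C₀(Ω, ℂ) := ∑' i, u i with hKdef
  have hKapply : ∀ y, K y = ∑' i, u i y := by
    intro y
    have := (evalCLM (Ω := Ω) y).map_tsum hsummable
    simpa [evalCLM_apply] using this
  have hmain : ∀ i : ℕ, ((i : ℝ) + 1) * (‖c‖ / 2) ≤ ‖T K‖ := by
    intro i
    set O : Set Ω := {y | 2 * t (mseq (i + 1)) < ‖h y‖ ∧ ‖h y‖ < t (mseq i)} with hOdef
    have hcont : Continuous fun y => ‖h y‖ := (map_continuous h).norm
    have hOopen : IsOpen O :=
      IsOpen.inter (isOpen_lt continuous_const hcont) (isOpen_lt hcont continuous_const)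
    have hxO : xs i ∈ O := ⟨hm2 i, (hpts (mseq i)).1⟩
    have hsingle : ∀ y ∈ O, ∀ l, l ≠ i → u l y = 0 := by
      intro y hy l hl
      have hyl : 2 * t (mseq (i + 1)) < ‖h y‖ := hy.1
      have hyr : ‖h y‖ < t (mseq i) := hy.2
      show (((l + 1 : ℕ) : ℂ) • (Q (mseq l) - Q (mseq (l + 1)))) y = 0
      have hQsub : (Q (mseq l) - Q (mseq (l + 1))) y = Q (mseq l) y - Q (mseq (l + 1)) y := rfl
      have hsmul : (((l + 1 : ℕ) : ℂ) • (Q (mseq l) - Q (mseq (l + 1)))) y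
          = ((l + 1 : ℕ) : ℂ) * ((Q (mseq l) - Q (mseq (l + 1))) y) := rfl
      rw [hsmul, hQsub]
      rcases lt_or_gt_of_ne hl with hli | hli
      · have hml : mseq (l + 1) ≤ mseq i := hmono.monotone hli
        have h1 : ‖h y‖ ≤ t (mseq (l + 1)) := hyr.le.trans (htanti hml)
        have h2 : ‖h y‖ ≤ t (mseq l) := h1.trans (htanti (hmlt l).le)
        rw [show Q (mseq l) y = qf h (t (mseq l)) y from rfl,
          show Q (mseq (l + 1)) y = qf h (t (mseq (l + 1))) y from rfl,
          qf_eq_self (htpos _) h2, qf_eq_self (htpos _) h1, sub_self, mul_zero]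
      · have hml : mseq (i + 1) ≤ mseq l := hmono.monotone hli
        have h1 : 2 * t (mseq l) ≤ ‖h y‖ := by
          have := htanti hml
          linarith
        have h2 : 2 * t (mseq (l + 1)) ≤ ‖h y‖ := by
          have := htanti (hml.trans (hmlt l).le)
          linarith
        rw [show Q (mseq l) y = qf h (t (mseq l)) y from rfl,
          show Q (mseq (l + 1)) y = qf h (t (mseq (l + 1))) y from rfl,
          qf_eq_zero (htpos _) h1, qf_eq_zero (htpos _) h2, sub_self, mul_zero]
    have hvan : ∀ y ∈ O, (K - u i) y = 0 := by
      intro y hy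
      show K y - u i y = 0
      rw [hKapply y, tsum_eq_single i (fun l hl => hsingle y hy l hl), sub_self]
    have hTK : T K (xs i) = T (u i) (xs i) := by
      have h0 := lemA T hloc (K - u i) hOopen hvan hxO
      rw [map_sub] at h0
      have h1 : T K (xs i) - T (u i) (xs i) = 0 := by simpa using h0
      linear_combination h1
    have hQ2zero : T (Q (mseq (i + 1))) (xs i) = 0 := by
      refine lemA T hloc _ (isOpen_lt continuous_const hcont :
        IsOpen {y | 2 * t (mseq (i + 1)) < ‖h y‖}) ?_ (hm2 i)
      intro y hy
      exact qf_eq_zero (htpos _) (le_of_lt hy)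
    have hTu : T (u i) (xs i) = ((i + 1 : ℕ) : ℂ) * (T (Q (mseq i)) (xs i)) := by
      have h0 : T (u i) = ((i + 1 : ℕ) : ℂ) • (T (Q (mseq i)) - T (Q (mseq (i + 1)))) := by
        rw [hudef]
        simp only [map_smul, map_sub]
      rw [h0]
      show ((i + 1 : ℕ) : ℂ) * ((T (Q (mseq i)) - T (Q (mseq (i + 1)))) (xs i))
        = ((i + 1 : ℕ) : ℂ) * (T (Q (mseq i)) (xs i))
      rw [show (T (Q (mseq i)) - T (Q (mseq (i + 1)))) (xs i)
        = T (Q (mseq i)) (xs i) - T (Q (mseq (i + 1))) (xs i) from rfl, hQ2zero, sub_zero]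
    have hσ : ‖c‖ / 2 ≤ ‖T (Q (mseq i)) (xs i)‖ := by
      have h1 : ‖T (Q (mseq i)) (xs i) - c‖ < ‖c‖ / 2 := hpt1 (mseq i)
      have h2 : ‖c‖ - ‖T (Q (mseq i)) (xs i)‖ ≤ ‖T (Q (mseq i)) (xs i) - c‖ := by
        have h3 := norm_sub_norm_le c (T (Q (mseq i)) (xs i))
        rw [norm_sub_rev] at h3
        exact h3
      linarith
    calc ((i : ℝ) + 1) * (‖c‖ / 2) ≤ ((i : ℝ) + 1) * ‖T (Q (mseq i)) (xs i)‖ := by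
          apply mul_le_mul_of_nonneg_left hσ (by positivity)
      _ = ‖T K (xs i)‖ := by
          rw [hTK, hTu, norm_mul, Complex.norm_natCast]
          push_cast
          ring
      _ ≤ ‖T K‖ := norm_apply_le _ _
  obtain ⟨n, hn⟩ := exists_nat_gt (‖T K‖ / (‖c‖ / 2))
  have h1 := hmain n
  have h2 : ‖T K‖ < (n : ℝ) * (‖c‖ / 2) := by
    rw [div_lt_iff₀ (by positivity)] at hn
    linarith
  nlinarith [hcpos]

end T

end Stmt5Aux

theorem stmt_5
    {Ω : Type*} [TopologicalSpace Ω] [LocallyCompactSpace Ω] [T2Space Ω]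
    (T : C₀(Ω, ℂ) →ₗ[ℂ] C₀(Ω, ℂ))
    (hloc : ∀ f g : C₀(Ω, ℂ), f * g = 0 → T f * g = 0) :
    ∀ f φ : C₀(Ω, ℂ), T (f * φ) = T f * φ := by
  intro f φ
  ext x
  have hkey := Stmt5Aux.key T hloc (f * φ - φ x • f) x (by
    show (f * φ) x - (φ x • f) x = 0
    show f x * φ x - φ x • f x = 0
    rw [smul_eq_mul]; ring)
  rw [map_sub, map_smul] at hkey
  have h1 : T (f * φ) x - φ x * T f x = 0 := by
    simpa [smul_eq_mul] using hkey
  show T (f * φ) x = T f x * φ x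
  linear_combination h1
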